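/- Let $\{\tau_k\}_{k\ge 0} \subseteq (0,1)$ and $\{\psi_k\}_{k\ge 0}$ be real sequences, and let $\{G_k\}_{k\ge 0}$ be a sequence of reals satisfying $G_{k+1} \le (1-\tau_k) G_k - \psi_k$ for all $k$. If $\lim_{k\to\infty}\tau_k = 0$, $\sum_{k=0}^\infty \tau_k = +\infty$, and $\sum_{k=0}^\infty |\psi_k| < +\infty$, then $\limsup_{k\to\infty} G_k \le 0$. -/

import Mathlib

open Filter

theorem gap_recursion_limsup_nonpos (τ ψ G : ℕ → ℝ)
    (hτ : ∀ k, τ k ∈ Set.Ioo (0:ℝ) 1)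
    (hG : ∀ k, G (k+1) ≤ (1 - τ k) * G k - ψ k)
    (hτ0 : Tendsto τ atTop (nhds 0))
    (hτsum : Tendsto (fun n => ∑ k ∈ Finset.range n, τ k) atTop atTop)
    (hψ : Summable fun k => |ψ k|) :
    limsup G atTop ≤ 0 := by
  have key : ∀ ε : ℝ, 0 < ε → ∀ᶠ n in atTop, G n ≤ ε := by
    intro ε hε
    set s : ℕ → ℝ := fun n => ∑ k ∈ Finset.range n, |ψ k| with hs
    obtain ⟨L, hL⟩ := hψ
    have hsL : Tendsto s atTop (nhds L) := hL.tendsto_sum_nat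
    have hmono : Monotone s := by
      intro a b hab
      exact Finset.sum_le_sum_of_subset_of_nonneg (Finset.range_subset_range.mpr hab)
        (fun k _ _ => abs_nonneg _)
    have hle : ∀ n, s n ≤ L := fun n => hmono.ge_of_tendsto hsL n
    -- choose m with L - s m ≤ ε/2
    have htail : ∀ᶠ n in atTop, L - s n ≤ ε / 2 := by
      have := hsL.eventually (eventually_ge_nhds (show L - ε/2 < L by linarith))
      filter_upwards [this] with n hn; linarith
    obtain ⟨m, hm⟩ := htail.exists
    set M : ℝ := max (G m) 0 with hM
    have hMnn : 0 ≤ M := le_max_right _ _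
    -- main induction
    have claim : ∀ n, m ≤ n →
        G n ≤ (∏ k ∈ Finset.Ico m n, (1 - τ k)) * M + ∑ k ∈ Finset.Ico m n, |ψ k| := by
      intro n hn
      induction n, hn using Nat.le_induction with
      | base => simp [hM, le_max_left]
      | succ n hn ih =>
        have hτn := hτ n
        have hQ : 0 ≤ ∏ k ∈ Finset.Ico m n, (1 - τ k) :=
          Finset.prod_nonneg fun k _ => by have := (hτ k).2; linarith
        have hS : 0 ≤ ∑ k ∈ Finset.Ico m n, |ψ k| :=
          Finset.sum_nonneg fun k _ => abs_nonneg _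
        have h1 : G (n+1) ≤ (1 - τ n) * G n + |ψ n| := by
          have := hG n; have := neg_abs_le (ψ n); linarith
        have h2 : (1 - τ n) * G n ≤
            (1 - τ n) * ((∏ k ∈ Finset.Ico m n, (1 - τ k)) * M + ∑ k ∈ Finset.Ico m n, |ψ k|) :=
          mul_le_mul_of_nonneg_left ih (by linarith [hτn.2])
        rw [Finset.prod_Ico_succ_top hn, Finset.sum_Ico_succ_top hn]
        nlinarith [hτn.1, hτn.2, mul_nonneg hτn.1.le hS,
          mul_nonneg (mul_nonneg hτn.1.le hQ) hMnn]
    -- tail sum bound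
    have hsum_le : ∀ n, m ≤ n → ∑ k ∈ Finset.Ico m n, |ψ k| ≤ ε / 2 := by
      intro n hn
      have : ∑ k ∈ Finset.Ico m n, |ψ k| = s n - s m := by
        rw [hs]; simp [Finset.sum_Ico_eq_sub _ hn]
      rw [this]
      have := hle n
      linarith
    -- product bound via exp
    have hprod_le : ∀ n, (∏ k ∈ Finset.Ico m n, (1 - τ k)) ≤
        Real.exp (-(∑ k ∈ Finset.Ico m n, τ k)) := by
      intro n
      calc (∏ k ∈ Finset.Ico m n, (1 - τ k))
          ≤ ∏ k ∈ Finset.Ico m n, Real.exp (-(τ k)) := by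
            apply Finset.prod_le_prod
            · exact fun k _ => by have := (hτ k).2; linarith
            · exact fun k _ => by
                have := Real.add_one_le_exp (-(τ k)); linarith
        _ = Real.exp (-(∑ k ∈ Finset.Ico m n, τ k)) := by
            rw [← Real.exp_sum]; simp
    have hsumIco : Tendsto (fun n => ∑ k ∈ Finset.Ico m n, τ k) atTop atTop := by
      have h1 : Tendsto (fun n => (∑ k ∈ Finset.range n, τ k) - ∑ k ∈ Finset.range m, τ k)
          atTop atTop := tendsto_atTop_add_const_right _ _ hτsum
      apply h1.congr'
      filter_upwards [eventually_ge_atTop m] with n hn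
      simp [Finset.sum_Ico_eq_sub _ hn]
    have hexp0 : Tendsto (fun n => Real.exp (-(∑ k ∈ Finset.Ico m n, τ k)) * M)
        atTop (nhds 0) := by
      have : Tendsto (fun n => Real.exp (-(∑ k ∈ Finset.Ico m n, τ k))) atTop (nhds 0) :=
        Real.tendsto_exp_atBot.comp (tendsto_neg_atTop_atBot.comp hsumIco)
      simpa using this.mul_const M
    have hev : ∀ᶠ n in atTop, Real.exp (-(∑ k ∈ Finset.Ico m n, τ k)) * M ≤ ε / 2 :=
      hexp0.eventually (eventually_le_nhds (by linarith))
    filter_upwards [hev, eventually_ge_atTop m] with n hn hmn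
    have hQle : (∏ k ∈ Finset.Ico m n, (1 - τ k)) * M ≤
        Real.exp (-(∑ k ∈ Finset.Ico m n, τ k)) * M :=
      mul_le_mul_of_nonneg_right (hprod_le n) hMnn
    have := claim n hmn
    have := hsum_le n hmn
    linarith
  -- conclude limsup ≤ 0
  rw [limsup_eq]
  by_cases h : BddBelow {a : ℝ | ∀ᶠ n in atTop, G n ≤ a}
  · refine le_of_forall_pos_le_add fun ε hε => ?_
    have : ε ∈ {a : ℝ | ∀ᶠ n in atTop, G n ≤ a} := key ε hε
    simpa using csInf_le h this
  · rw [Real.sInf_of_not_bddBelow h]
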